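/- Let φ : (−1,1) → ℝ be a C² solution of Lφ = 0 that is nonincreasing and strictly positive on (−1,1). Then φ is strictly convex on (−1,1). -/

import Mathlib

open Set

set_option maxHeartbeats 1000000

theorem stmt3 (lam mu alp : ℝ) (hlam : 0 < lam) (hmu : 0 < mu) (halp : 0 < alp)
    (φ φ' φ'' : ℝ → ℝ)
    (hd1 : ∀ x ∈ Set.Ioo (-1 : ℝ) 1, HasDerivAt φ (φ' x) x)
    (hd2 : ∀ x ∈ Set.Ioo (-1 : ℝ) 1, HasDerivAt φ' (φ'' x) x)
    (hode : ∀ x ∈ Set.Ioo (-1 : ℝ) 1,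
      mu ^ 2 / 2 * (1 - x ^ 2) ^ 2 * φ'' x - 2 * lam * x * φ' x - alp * φ x = 0)
    (hanti : AntitoneOn φ (Set.Ioo (-1 : ℝ) 1))
    (hpos : ∀ x ∈ Set.Ioo (-1 : ℝ) 1, 0 < φ x) :
    StrictConvexOn ℝ (Set.Ioo (-1 : ℝ) 1) φ := by
  have hso : IsOpen (Set.Ioo (-1 : ℝ) 1) := isOpen_Ioo
  have hne : ∀ x ∈ Set.Ioo (-1 : ℝ) 1, (1 - x ^ 2) ≠ 0 := by
    intro x hx; obtain ⟨h1, h2⟩ := hx; nlinarith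
  have hsq : ∀ x ∈ Set.Ioo (-1 : ℝ) 1, 0 < (1 - x ^ 2) ^ 2 := by
    intro x hx
    have : 0 < 1 - x ^ 2 := by obtain ⟨h1, h2⟩ := hx; nlinarith
    positivity
  have hkey : ∀ x ∈ Set.Ioo (-1 : ℝ) 1,
      mu ^ 2 / 2 * (1 - x ^ 2) ^ 2 * φ'' x = 2 * lam * x * φ' x + alp * φ x := by
    intro x hx; linarith [hode x hx]
  -- Step 1 : φ' ≤ 0
  have h1 : ∀ x ∈ Set.Ioo (-1 : ℝ) 1, φ' x ≤ 0 := by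
    intro x hx
    have ht : Filter.Tendsto (slope φ x) (nhdsWithin x (Set.Ioi x)) (nhds (φ' x)) :=
      (hasDerivAt_iff_tendsto_slope.1 (hd1 x hx)).mono_left
        (nhdsWithin_mono x (fun y hy => ne_of_gt hy))
    refine le_of_tendsto ht ?_
    filter_upwards [Ioo_mem_nhdsGT_of_mem ⟨le_refl x, hx.2⟩] with y hy
    have hys : y ∈ Set.Ioo (-1 : ℝ) 1 := ⟨lt_trans hx.1 hy.1, hy.2⟩
    have hle : φ y ≤ φ x := hanti hx hys hy.1.le
    have : slope φ x y = (φ y - φ x) / (y - x) := slope_def_field φ x y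
    rw [this]
    exact div_nonpos_of_nonpos_of_nonneg (by linarith) (by linarith [hy.1])
  -- Step 2 : φ' < 0
  have h2 : ∀ x ∈ Set.Ioo (-1 : ℝ) 1, φ' x < 0 := by
    intro x hx
    rcases (h1 x hx).lt_or_eq with h | h
    · exact h
    · exfalso
      have hdd : 0 < φ'' x := by
        by_contra hc
        push_neg at hc
        have heq : mu ^ 2 / 2 * (1 - x ^ 2) ^ 2 * φ'' x = alp * φ x := by
          rw [hkey x hx, h]; ring
        nlinarith [mul_pos halp (hpos x hx), mul_nonneg (mul_nonneg (sq_nonneg mu) (hsq x hx).le)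
          (neg_nonneg.2 hc)]
      have ht : Filter.Tendsto (slope φ' x) (nhdsWithin x (Set.Ioi x)) (nhds (φ'' x)) :=
        (hasDerivAt_iff_tendsto_slope.1 (hd2 x hx)).mono_left
          (nhdsWithin_mono x (fun y hy => ne_of_gt hy))
      have hev : ∀ᶠ y in nhdsWithin x (Set.Ioi x), 0 < slope φ' x y :=
        ht.eventually (eventually_gt_nhds hdd)
      have hmem : Set.Ioo x 1 ∈ nhdsWithin x (Set.Ioi x) :=
        Ioo_mem_nhdsGT_of_mem ⟨le_refl x, hx.2⟩
      obtain ⟨y, hsl, hy⟩ := (hev.and (Filter.eventually_of_mem hmem (fun y hy => hy))).exists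
      have hys : y ∈ Set.Ioo (-1 : ℝ) 1 := ⟨lt_trans hx.1 hy.1, hy.2⟩
      rw [slope_def_field] at hsl
      have : 0 < φ' y - φ' x := by
        have hyx : 0 < y - x := by linarith [hy.1]
        by_contra hc
        push_neg at hc
        nlinarith [div_nonpos_of_nonpos_of_nonneg (by linarith : φ' y - φ' x ≤ 0) hyx.le]
      have := h1 y hys
      linarith [h]
  -- Step 3 : the integrating-factor function v is strictly decreasing
  set E : ℝ → ℝ := fun x => Real.exp (-(2 * lam / mu ^ 2) * (1 - x ^ 2)⁻¹) with hEdef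
  set v : ℝ → ℝ := fun x => (2 * lam * x * φ' x + alp * φ x) * E x with hvdef
  have hEpos : ∀ x : ℝ, 0 < E x := fun x => Real.exp_pos _
  have hvd : ∀ x ∈ Set.Ioo (-1 : ℝ) 1,
      HasDerivAt v ((2 * lam + alp) * φ' x * E x) x := by
    intro x hx
    have hne' := hne x hx
    have ha : HasDerivAt (fun x : ℝ => 2 * lam * x) (2 * lam) x := by
      simpa using (hasDerivAt_id x).const_mul (2 * lam)
    have hw : HasDerivAt (fun x => 2 * lam * x * φ' x + alp * φ x)
        (2 * lam * φ' x + 2 * lam * x * φ'' x + alp * φ' x) x := by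
      exact (ha.mul (hd2 x hx)).add ((hd1 x hx).const_mul alp)
    have hin : HasDerivAt (fun x : ℝ => 1 - x ^ 2) (-(2 * x)) x := by
      simpa using ((hasDerivAt_pow 2 x).const_sub 1)
    have hinv := hin.inv hne'
    have hu := hinv.const_mul (-(2 * lam / mu ^ 2))
    have hExp := hu.exp
    have hV := hw.mul hExp
    have key := hkey x hx
    have hiden : 2 * lam * φ' x + 2 * lam * x * φ'' x + alp * φ' x
        + (2 * lam * x * φ' x + alp * φ x) *
          (-(2 * lam / mu ^ 2) * (- -(2 * x) / (1 - x ^ 2) ^ 2))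
        = (2 * lam + alp) * φ' x := by
      have h2' : (1 - x ^ 2) ^ 2 ≠ 0 := pow_ne_zero _ hne'
      have hmu' : mu ≠ 0 := ne_of_gt hmu
      field_simp
      linear_combination (4 * lam * x) * key
    refine hV.congr_deriv ?_
    linear_combination ((Real.exp (-(2 * lam / mu ^ 2) * (1 - x ^ 2)⁻¹))) * hiden
  have hvanti : StrictAntiOn v (Set.Ioo (-1 : ℝ) 1) := by
    apply strictAntiOn_of_deriv_neg (convex_Ioo _ _)
    · exact fun x hx => ((hvd x hx).continuousAt).continuousWithinAt
    · intro x hx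
      rw [interior_Ioo] at hx
      rw [(hvd x hx).deriv]
      have hE := hEpos x
      have := h2 x hx
      nlinarith [mul_pos (mul_pos (by linarith : (0:ℝ) < 2 * lam + alp)
        (neg_pos.2 this)) hE]
  -- Step 4 : w > 0 on the interval
  have hwpos : ∀ x ∈ Set.Ioo (-1 : ℝ) 1, 0 < 2 * lam * x * φ' x + alp * φ x := by
    intro x₁ hx₁
    by_contra hcon
    push_neg at hcon
    set x₂ : ℝ := (x₁ + 1) / 2 with hx₂def
    have hx₁₂ : x₁ < x₂ := by rw [hx₂def]; linarith [hx₁.2]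
    have hx₂1 : x₂ < 1 := by rw [hx₂def]; linarith [hx₁.2]
    have hx₂s : x₂ ∈ Set.Ioo (-1 : ℝ) 1 := ⟨by rw [hx₂def]; linarith [hx₁.1], hx₂1⟩
    have hv1 : v x₁ ≤ 0 := mul_nonpos_of_nonpos_of_nonneg hcon (hEpos x₁).le
    have hv2 : v x₂ < 0 := lt_of_lt_of_le (hvanti hx₁ hx₂s hx₁₂) hv1
    set c : ℝ := -v x₂ with hcdef
    have hc : 0 < c := by rw [hcdef]; linarith
    set c₁ : ℝ := c / (2 * mu ^ 2) with hc₁def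
    have hc₁ : 0 < c₁ := by rw [hc₁def]; positivity
    -- On [x₂, 1), w ≤ -c
    have hwle : ∀ x ∈ Set.Ico x₂ 1, 2 * lam * x * φ' x + alp * φ x ≤ -c := by
      intro x hx
      have hxs : x ∈ Set.Ioo (-1 : ℝ) 1 := ⟨lt_of_lt_of_le hx₂s.1 hx.1, hx.2⟩
      have hvx : v x ≤ v x₂ := by
        rcases eq_or_lt_of_le hx.1 with h | h
        · rw [← h]
        · exact (hvanti hx₂s hxs h).le
      have hEx1 : E x ≤ 1 := by
        rw [hEdef]
        simp only
        rw [Real.exp_le_one_iff]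
        have hinvpos : 0 < (1 - x ^ 2)⁻¹ := by
          have : 0 < 1 - x ^ 2 := by obtain ⟨u1, u2⟩ := hxs; nlinarith
          positivity
        nlinarith [div_pos (mul_pos (by norm_num : (0:ℝ) < 2) hlam) (pow_pos hmu 2)]
      have hEx0 := hEpos x
      have hvxw : (2 * lam * x * φ' x + alp * φ x) * E x ≤ -c := by
        calc (2 * lam * x * φ' x + alp * φ x) * E x = v x := by rw [hvdef]
        _ ≤ v x₂ := hvx
        _ = -c := by rw [hcdef]; ring
      nlinarith [hvxw, hEx0, hEx1, hc]
    -- pointwise second-derivative bound on (x₂, 1)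
    have hIcoSub : Set.Ico x₂ 1 ⊆ Set.Ioo (-1 : ℝ) 1 :=
      fun x hx => ⟨lt_of_lt_of_le hx₂s.1 hx.1, hx.2⟩
    have hq : ∀ x ∈ Set.Ioo x₂ 1, φ'' x * (1 - x) ^ 2 + c₁ ≤ 0 := by
      intro x hx
      have hxs : x ∈ Set.Ioo (-1 : ℝ) 1 := hIcoSub ⟨hx.1.le, hx.2⟩
      have hcc : c = c₁ * (2 * mu ^ 2) := by
        rw [hc₁def]; field_simp
      have hkw : mu ^ 2 / 2 * (1 - x ^ 2) ^ 2 * φ'' x ≤ -(c₁ * (2 * mu ^ 2)) := by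
        rw [← hcc]
        linarith [hkey x hxs, hwle x ⟨hx.1.le, hx.2⟩]
      have hx1 : -1 < x := hxs.1
      have hx2 : x < 1 := hxs.2
      by_contra hcg
      push_neg at hcg
      have hmx : (0:ℝ) < mu ^ 2 * (1 + x) ^ 2 :=
        mul_pos (pow_pos hmu 2) (pow_pos (by linarith) 2)
      have hp := mul_pos hcg hmx
      nlinarith [hp, hkw, mul_nonneg (mul_nonneg hc₁.le (sq_nonneg mu))
        (by nlinarith : (0:ℝ) ≤ 4 - (1 + x) ^ 2)]
    -- G = φ' + c₁ (1-x)⁻¹ is antitone on [x₂, 1)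
    have hGd : ∀ x ∈ Set.Ioo x₂ 1,
        HasDerivAt (fun y => φ' y + c₁ * (1 - y)⁻¹)
          (φ'' x + c₁ * (- (-1) / (1 - x) ^ 2)) x := by
      intro x hx
      have hxs : x ∈ Set.Ioo (-1 : ℝ) 1 := hIcoSub ⟨hx.1.le, hx.2⟩
      have hlin : HasDerivAt (fun y : ℝ => 1 - y) (-1) x := by
        simpa using (hasDerivAt_id x).const_sub 1
      have h1x : (1 : ℝ) - x ≠ 0 := by
        have := hxs.2; intro hcontra; linarith [sub_eq_zero.1 hcontra]
      exact (hd2 x hxs).add ((hlin.inv h1x).const_mul c₁)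
    have hGanti : AntitoneOn (fun y => φ' y + c₁ * (1 - y)⁻¹) (Set.Ico x₂ 1) := by
      apply antitoneOn_of_deriv_nonpos (convex_Ico _ _)
      · apply ContinuousOn.add
        · exact fun x hx => (hd2 x (hIcoSub hx)).continuousAt.continuousWithinAt
        · refine continuousOn_const.mul (ContinuousOn.inv₀
            (continuousOn_const.sub continuousOn_id) ?_)
          intro x hx
          have := hx.2; intro hcontra; linarith [sub_eq_zero.1 hcontra]
      · intro x hx
        rw [interior_Ico] at hx
        exact ((hGd x hx).differentiableAt).differentiableWithinAt
      · intro x hx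
        rw [interior_Ico] at hx
        rw [(hGd x hx).deriv]
        have hP : (0:ℝ) < (1 - x) ^ 2 := pow_pos (by linarith [hx.2]) 2
        have h3 : φ'' x + c₁ * (- (-1) / (1 - x) ^ 2)
            = (φ'' x * (1 - x) ^ 2 + c₁) / (1 - x) ^ 2 := by
          field_simp
          rw [add_div, mul_div_cancel_right₀ _ hP.ne']
        rw [h3]
        exact div_nonpos_of_nonpos_of_nonneg (hq x hx) hP.le
    set A : ℝ := φ' x₂ + c₁ * (1 - x₂)⁻¹ with hAdef
    have hGA : ∀ x ∈ Set.Ico x₂ 1, φ' x + c₁ * (1 - x)⁻¹ ≤ A :=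
      fun x hx => hGanti (left_mem_Ico.2 hx₂1) hx hx.1
    -- H = φ - A x - c₁ log (1-x) is antitone on [x₂, 1)
    set H : ℝ → ℝ := fun y => φ y - A * y - c₁ * Real.log (1 - y) with hHdef
    have hHd : ∀ x ∈ Set.Ioo x₂ 1,
        HasDerivAt H (φ' x - A * 1 - c₁ * (-1 / (1 - x))) x := by
      intro x hx
      have hxs : x ∈ Set.Ioo (-1 : ℝ) 1 := hIcoSub ⟨hx.1.le, hx.2⟩
      have hlin : HasDerivAt (fun y : ℝ => 1 - y) (-1) x := by
        simpa using (hasDerivAt_id x).const_sub 1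
      have h1x : (1 : ℝ) - x ≠ 0 := by
        have := hxs.2; intro hcontra; linarith [sub_eq_zero.1 hcontra]
      exact ((hd1 x hxs).sub ((hasDerivAt_id x).const_mul A)).sub
        ((hlin.log h1x).const_mul c₁)
    have hHanti : AntitoneOn H (Set.Ico x₂ 1) := by
      apply antitoneOn_of_deriv_nonpos (convex_Ico _ _)
      · rw [hHdef]
        apply ContinuousOn.sub
        apply ContinuousOn.sub
        · exact fun x hx => (hd1 x (hIcoSub hx)).continuousAt.continuousWithinAt
        · exact continuousOn_const.mul continuousOn_id
        · refine continuousOn_const.mul (ContinuousOn.log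
            (continuousOn_const.sub continuousOn_id) ?_)
          intro x hx
          have := hx.2; intro hcontra; linarith [sub_eq_zero.1 hcontra]
      · intro x hx
        rw [interior_Ico] at hx
        exact ((hHd x hx).differentiableAt).differentiableWithinAt
      · intro x hx
        rw [interior_Ico] at hx
        rw [(hHd x hx).deriv]
        have h1x : (1 : ℝ) - x ≠ 0 := by
          have := hx.2; intro hcontra; linarith [sub_eq_zero.1 hcontra]
        have hrw : c₁ * (-1 / (1 - x)) = -(c₁ * (1 - x)⁻¹) := by ring
        have := hGA x ⟨hx.1.le, hx.2⟩
        rw [hrw]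
        linarith
    -- choose a point x₃ close to 1 where φ must be negative
    set B : ℝ := H x₂ + |A| with hBdef
    set t : ℝ := min ((1 - x₂) / 2) (Real.exp (-(B + 1) / c₁)) with htdef
    have ht0 : 0 < t := lt_min (by linarith) (Real.exp_pos _)
    set x₃ : ℝ := 1 - t with hx₃def
    have htle : t ≤ (1 - x₂) / 2 := min_le_left _ _
    have hx₃mem : x₃ ∈ Set.Ico x₂ 1 := by
      constructor
      · rw [hx₃def]; linarith
      · rw [hx₃def]; linarith
    have hx₃s : x₃ ∈ Set.Ioo (-1 : ℝ) 1 := hIcoSub hx₃mem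
    have hH3 : H x₃ ≤ H x₂ := hHanti (left_mem_Ico.2 hx₂1) hx₃mem hx₃mem.1
    have hAx : A * x₃ ≤ |A| := by
      calc A * x₃ ≤ |A * x₃| := le_abs_self _
      _ = |A| * |x₃| := abs_mul _ _
      _ ≤ |A| * 1 := by
          apply mul_le_mul_of_nonneg_left _ (abs_nonneg A)
          rw [abs_le]
          exact ⟨by linarith [hx₃s.1], by linarith [hx₃s.2]⟩
      _ = |A| := mul_one _
    have hlogle : Real.log (1 - x₃) ≤ -(B + 1) / c₁ := by
      have h1x₃ : 1 - x₃ = t := by rw [hx₃def]; ring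
      rw [h1x₃]
      calc Real.log t ≤ Real.log (Real.exp (-(B + 1) / c₁)) := by
            rw [Real.log_le_log_iff ht0 (Real.exp_pos _)]
            exact min_le_right _ _
      _ = -(B + 1) / c₁ := Real.log_exp _
    have hc₁log : c₁ * Real.log (1 - x₃) ≤ -(B + 1) := by
      have := mul_le_mul_of_nonneg_left hlogle hc₁.le
      calc c₁ * Real.log (1 - x₃) ≤ c₁ * (-(B + 1) / c₁) := this
      _ = -(B + 1) := by field_simp
    have hφx₃ : φ x₃ ≤ -1 := by
      have hHx₃ : H x₃ = φ x₃ - A * x₃ - c₁ * Real.log (1 - x₃) := by rw [hHdef]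
      have hB : B = H x₂ + |A| := hBdef
      linarith [hH3, hAx, hc₁log]
    linarith [hpos x₃ hx₃s]
  -- Step 5 : conclude strict convexity
  have h2nd : ∀ x ∈ Set.Ioo (-1 : ℝ) 1, 0 < φ'' x := by
    intro x hx
    by_contra hcg
    push_neg at hcg
    have := hkey x hx
    nlinarith [hwpos x hx, mul_nonneg (mul_nonneg (sq_nonneg mu) (hsq x hx).le)
      (neg_nonneg.2 hcg)]
  apply strictConvexOn_of_deriv2_pos (convex_Ioo _ _)
  · exact fun x hx => (hd1 x hx).continuousAt.continuousWithinAt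
  · intro x hx
    rw [interior_Ioo] at hx
    have hdd : deriv (deriv φ) x = deriv φ' x := by
      apply Filter.EventuallyEq.deriv_eq
      filter_upwards [hso.mem_nhds hx] with y hy
      exact (hd1 y hy).deriv
    have : (deriv^[2] φ) x = deriv (deriv φ) x := by
      simp [Function.iterate_succ, Function.comp]
    rw [this, hdd, (hd2 x hx).deriv]
    exact h2nd x hx
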